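/- arXiv:1609.04512 — 2 statements merged into one kernel-verified Lean document; each statement's English description precedes it below -/
import Mathlib

section
/- Left-justification is safe for a k-way merge: let σ be a total order of the platoons of a k-way merge instance extending each lane's release order, and suppose S is a valid schedule whose platoons cross in the order σ (crossing times are increasing along σ). Then the left-justified schedule for σ is valid, every platoon's crossing time in the left-justified schedule is at most its crossing time in S, and hence the delay of the left-justified schedule is at most the delay of S. -/
/-- Left-justified scheduling of a crossing order of (lane, release, length)
triples, where the previous platoon finished at time `t`: each platoon crosses at
the maximum of its release time and the previous platoon's crossing time plus
length. -/
noncomputable def leftJust {α : Type} : ℝ → List (α × ℝ × ℝ) → List (α × (ℝ × ℝ) × ℝ)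
  | _, [] => []
  | t, (b, p) :: L => (b, p, max t p.1) :: leftJust (max t p.1 + p.2) L

/-- The left-justified schedule for a crossing order: the first platoon crosses at
its release time, and each subsequent platoon crosses at the maximum of its
release time and the previous platoon's crossing time plus length. -/
noncomputable def leftJustStart {α : Type} : List (α × ℝ × ℝ) → List (α × (ℝ × ℝ) × ℝ)
  | [] => []
  | (b, p) :: L => (b, p, p.1) :: leftJust (p.1 + p.2) L

lemma leftJustStart_eq {α : Type} (b : α) (p : ℝ × ℝ) (L : List (α × ℝ × ℝ)) :
    leftJustStart ((b, p) :: L) = leftJust p.1 ((b, p) :: L) := by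
  simp [leftJust, leftJustStart]

lemma leftJust_rel {α : Type} : ∀ (t : ℝ) (L : List (α × ℝ × ℝ)),
    ∀ e ∈ leftJust t L, e.2.1.1 ≤ e.2.2
  | t, [] => by simp [leftJust]
  | t, (b, p) :: L => by
    simp only [leftJust, List.mem_cons]
    rintro e (rfl | he)
    · exact le_max_right _ _
    · exact leftJust_rel _ L e he

lemma leftJust_head {α : Type} (t : ℝ) : ∀ (L : List (α × ℝ × ℝ)) (e : α × (ℝ × ℝ) × ℝ),
    (leftJust t L).head? = some e → t ≤ e.2.2
  | [], e => by simp [leftJust]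
  | (b, p) :: L, e => by
    simp only [leftJust, List.head?_cons, Option.some.injEq]
    rintro rfl
    exact le_max_left _ _

lemma leftJust_chain {α : Type} : ∀ (t : ℝ) (L : List (α × ℝ × ℝ)),
    (leftJust t L).Chain' (fun e f => e.2.2 + e.2.1.2 ≤ f.2.2)
  | _, [] => by simp [leftJust]; exact List.isChain_nil
  | t, (b, p) :: L => by
    rw [leftJust]
    refine List.isChain_cons.mpr ⟨?_, leftJust_chain _ L⟩
    intro f hf
    exact leftJust_head _ L f hf

lemma leftJust_le {α : Type} : ∀ (t : ℝ) (S : List (α × (ℝ × ℝ) × ℝ)),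
    (∀ e ∈ S, e.2.1.1 ≤ e.2.2) →
    S.Chain' (fun e f => e.2.2 + e.2.1.2 ≤ f.2.2) →
    (∀ e' : α × (ℝ × ℝ) × ℝ, S.head? = some e' → t ≤ e'.2.2) →
    ∀ (k : ℕ) (e e' : α × (ℝ × ℝ) × ℝ),
      (leftJust t (S.map (fun e => (e.1, e.2.1))))[k]? = some e → S[k]? = some e' →
      e.2.2 ≤ e'.2.2
  | t, [], _, _, _ => by simp
  | t, s :: S, hrel, hchain, hhead => by
    intro k e e' he he'
    match k with
    | 0 =>
      simp only [List.map_cons, leftJust, List.getElem?_cons_zero, Option.some.injEq] at he he'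
      subst he he'
      exact max_le (hhead s rfl) (hrel s (List.mem_cons_self))
    | k + 1 =>
      simp only [List.map_cons, leftJust, List.getElem?_cons_succ] at he he'
      refine leftJust_le _ S (fun f hf => hrel f (List.mem_cons_of_mem _ hf))
        (List.isChain_cons.mp hchain).2 ?_ k e e' he he'
      intro f hf
      have h1 : s.2.2 + s.2.1.2 ≤ f.2.2 := (List.isChain_cons.mp hchain).1 f hf
      have h2 : max t s.2.1.1 ≤ s.2.2 :=
        max_le (hhead s rfl) (hrel s (List.mem_cons_self))
      linarith

lemma leftJust_map {α : Type} : ∀ (t : ℝ) (L : List (α × ℝ × ℝ)),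
    (leftJust t L).map (fun e => (e.1, e.2.1)) = L
  | _, [] => by simp [leftJust]
  | t, (b, p) :: L => by
    simp only [leftJust, List.map_cons, leftJust_map _ L]

/-- Left-justification is safe for a k-way merge (lanes indexed by `α`; any two
platoons on different lanes are incompatible, so that a schedule whose crossing
times increase along the crossing order `σ` is valid exactly when every platoon
crosses no earlier than its release time and each platoon finishes crossing
before the next one starts).  Let `σ` be a crossing order extending each lane's
release order, and let `S` be a valid schedule crossing in the order `σ`.  Then
the left-justified schedule for `σ` is valid, each of its crossing times is at
most the corresponding crossing time of `S`, and hence its delay is at most the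
delay of `S`. -/
theorem stmt6 {α : Type} (σ : List (α × ℝ × ℝ))
    (hpos : ∀ e ∈ σ, 0 < e.2.2)
    (horder : ∀ i j : ℕ, i < j → ∀ ei ej, σ[i]? = some ei → σ[j]? = some ej →
      ei.1 = ej.1 → ei.2.1 + ei.2.2 ≤ ej.2.1)
    (S : List (α × (ℝ × ℝ) × ℝ))
    (hSσ : S.map (fun e => (e.1, e.2.1)) = σ)
    (hSrel : ∀ e ∈ S, e.2.1.1 ≤ e.2.2)
    (hSchain : S.Chain' (fun e f => e.2.2 + e.2.1.2 ≤ f.2.2)) :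
    (∀ e ∈ leftJustStart σ, e.2.1.1 ≤ e.2.2) ∧
    (leftJustStart σ).Chain' (fun e f => e.2.2 + e.2.1.2 ≤ f.2.2) ∧
    (∀ (k : ℕ) (e e' : α × (ℝ × ℝ) × ℝ),
      (leftJustStart σ)[k]? = some e → S[k]? = some e' → e.2.2 ≤ e'.2.2) ∧
    (∀ d : ℝ, (∀ e ∈ S, e.2.2 - e.2.1.1 ≤ d) →
      ∀ e ∈ leftJustStart σ, e.2.2 - e.2.1.1 ≤ d) := by
  obtain ⟨t0, hLJ, hhead⟩ : ∃ t0, leftJustStart σ = leftJust t0 σ ∧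
      ∀ e' : α × (ℝ × ℝ) × ℝ, S.head? = some e' → t0 ≤ e'.2.2 := by
    match S, σ, hSσ with
    | [], _, rfl => exact ⟨0, by simp [leftJust, leftJustStart], by simp⟩
    | s :: S, _, rfl =>
      refine ⟨s.2.1.1, leftJustStart_eq s.1 s.2.1 _, ?_⟩
      intro f hf
      simp only [List.head?_cons, Option.some.injEq] at hf
      subst hf
      exact hSrel _ (List.mem_cons_self)
  have hle : ∀ (k : ℕ) (e e' : α × (ℝ × ℝ) × ℝ),
      (leftJustStart σ)[k]? = some e → S[k]? = some e' → e.2.2 ≤ e'.2.2 := by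
    rw [hLJ]
    intro k e e' he he'
    rw [← hSσ] at he
    exact leftJust_le t0 S hSrel hSchain hhead k e e' he he'
  refine ⟨by rw [hLJ]; exact leftJust_rel t0 σ, by rw [hLJ]; exact leftJust_chain t0 σ, hle, ?_⟩
  intro d hd e he
  obtain ⟨k, hk, hke⟩ := List.getElem_of_mem he
  have hkS : k < S.length := by
    have h1 : (leftJustStart σ).length = σ.length := by
      rw [hLJ]
      calc (leftJust t0 σ).length = ((leftJust t0 σ).map (fun e => (e.1, e.2.1))).length := by
            simp
        _ = σ.length := by rw [leftJust_map]
    have h2 : S.length = σ.length := by rw [← hSσ]; simp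
    omega
  set e' := S[k] with he'
  have hproj : (e.1, e.2.1) = (e'.1, e'.2.1) := by
    have h1 : ((leftJustStart σ).map (fun e => (e.1, e.2.1)))[k]? = some (e.1, e.2.1) := by
      rw [List.getElem?_map]
      simp [List.getElem?_eq_getElem hk, hke]
    have h2 : (S.map (fun e => (e.1, e.2.1)))[k]? = some (e'.1, e'.2.1) := by
      rw [List.getElem?_map]
      simp [List.getElem?_eq_getElem hkS, he']
    rw [hSσ] at h2
    rw [hLJ] at h1
    rw [leftJust_map] at h1
    rw [h1] at h2
    exact (Option.some.injEq _ _ ▸ h2).symm ▸ rfl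
  have hcross : e.2.2 ≤ e'.2.2 := by
    refine hle k e e' ?_ ?_
    · simp [List.getElem?_eq_getElem hk, hke]
    · simp [List.getElem?_eq_getElem hkS, he']
  have hrel : e.2.1 = e'.2.1 := congrArg Prod.snd hproj
  have hd' : e'.2.2 - e'.2.1.1 ≤ d := hd e' (List.getElem_mem hkS)
  rw [hrel]
  linarith
end

section
/- Dynamic programming recurrence for the k-way merge: fix a k-way merge instance, a real delay bound d, and for each state s define t_d(s) as the infimum of completion times of valid partial schedules for s in which every scheduled platoon has delay at most d (t_d(s) = +∞ if no such partial schedule exists), where the completion time of the empty state is the minimum release time of any platoon of the instance. Then for every nonempty state s, t_d(s) equals the minimum, over all lanes j with s_j ≥ 1 such that max(t_d(s − e_j), r) ≤ r + d, of max(t_d(s − e_j), r) + ℓ, where s − e_j is s with its j-th coordinate decreased by one and r and ℓ are the release time and length of the s_j-th platoon (in release order) on lane j; the minimum over an empty set is +∞. -/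
/-- A platoon is a pair (release time, length). -/
abbrev Platoon := ℝ × ℝ

/-- A lane: a list of platoons in release order, with positive lengths and
disjoint release ranges. -/
def LaneOK (P : List Platoon) : Prop :=
  (∀ p ∈ P, 0 < p.2) ∧ P.Chain' (fun p q => p.1 + p.2 ≤ q.1)

/-- Release time of the `i`-th platoon (0-indexed, in release order) on lane `j`. -/
def rel {k : ℕ} (Lanes : Fin k → List Platoon) (j : Fin k) (i : ℕ) : ℝ :=
  ((Lanes j).getD i (0, 0)).1

/-- Length of the `i`-th platoon (0-indexed, in release order) on lane `j`. -/
def plen {k : ℕ} (Lanes : Fin k → List Platoon) (j : Fin k) (i : ℕ) : ℝ :=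
  ((Lanes j).getD i (0, 0)).2

/-- A valid partial schedule for the state `s` of a `k`-way merge (any two
platoons on different lanes are incompatible): crossing times `c j i` for the
first `s j` platoons of each lane `j` satisfying the three validity conditions. -/
def PartialValid {k : ℕ} (Lanes : Fin k → List Platoon) (s : Fin k → ℕ)
    (c : Fin k → ℕ → ℝ) : Prop :=
  (∀ j, ∀ i < s j, rel Lanes j i ≤ c j i) ∧
  (∀ j, ∀ i₁ i₂, i₁ < i₂ → i₂ < s j → c j i₁ + plen Lanes j i₁ ≤ c j i₂) ∧
  (∀ j₁ j₂, j₁ ≠ j₂ → ∀ i₁ < s j₁, ∀ i₂ < s j₂,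
    Disjoint (Set.Ioo (c j₁ i₁) (c j₁ i₁ + plen Lanes j₁ i₁))
             (Set.Ioo (c j₂ i₂) (c j₂ i₂ + plen Lanes j₂ i₂)))

/-- Every platoon scheduled in the partial schedule has delay at most `d`. -/
def DelayLE {k : ℕ} (Lanes : Fin k → List Platoon) (s : Fin k → ℕ)
    (c : Fin k → ℕ → ℝ) (d : ℝ) : Prop :=
  ∀ j, ∀ i < s j, c j i - rel Lanes j i ≤ d

/-- The minimum release time of any platoon of the instance. -/
noncomputable def minRelease {k : ℕ} (Lanes : Fin k → List Platoon) : ℝ :=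
  sInf {x : ℝ | ∃ j, ∃ i < (Lanes j).length, x = rel Lanes j i}

/-- The completion time of a partial schedule: the maximum, over the scheduled
platoons, of crossing time plus length; the completion time of the empty state is
the minimum release time of any platoon of the instance. -/
noncomputable def completion {k : ℕ} (Lanes : Fin k → List Platoon)
    (s : Fin k → ℕ) (c : Fin k → ℕ → ℝ) : ℝ :=
  sSup ({minRelease Lanes} ∪ {x : ℝ | ∃ j, ∃ i < s j, x = c j i + plen Lanes j i})

/-- `td Lanes d s` is the infimum of the completion times of valid partial
schedules for state `s` in which every scheduled platoon has delay at most `d`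
(`+∞` if no such partial schedule exists). -/
noncomputable def td {k : ℕ} (Lanes : Fin k → List Platoon) (d : ℝ)
    (s : Fin k → ℕ) : EReal :=
  sInf {x : EReal | ∃ c, PartialValid Lanes s c ∧ DelayLE Lanes s c d ∧
    x = ((completion Lanes s c : ℝ) : EReal)}

section Helpers

variable {k : ℕ} (Lanes : Fin k → List Platoon)

lemma plen_pos (hL : ∀ j, LaneOK (Lanes j)) {j : Fin k} {i : ℕ}
    (h : i < (Lanes j).length) : 0 < plen Lanes j i := by
  have hm : (Lanes j).getD i (0, 0) ∈ Lanes j := by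
    rw [List.getD_eq_getElem _ _ h]
    exact List.getElem_mem h
  exact (hL j).1 _ hm

lemma releaseSet_finite :
    {x : ℝ | ∃ j, ∃ i < (Lanes j).length, x = rel Lanes j i}.Finite := by
  apply Set.Finite.subset (Set.finite_iUnion
    (fun j : Fin k => (Set.finite_lt_nat (Lanes j).length).image (rel Lanes j)))
  rintro x ⟨j, i, hi, rfl⟩
  exact Set.mem_iUnion.2 ⟨j, ⟨i, hi, rfl⟩⟩

lemma minRelease_le {j : Fin k} {i : ℕ} (h : i < (Lanes j).length) :
    minRelease Lanes ≤ rel Lanes j i :=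
  csInf_le (releaseSet_finite Lanes).bddBelow ⟨j, i, h, rfl⟩

lemma compSet_finite (s : Fin k → ℕ) (c : Fin k → ℕ → ℝ) :
    ({minRelease Lanes} ∪
      {x : ℝ | ∃ j, ∃ i < s j, x = c j i + plen Lanes j i}).Finite := by
  apply Set.Finite.union (Set.finite_singleton _)
  apply Set.Finite.subset (Set.finite_iUnion
    (fun j : Fin k => (Set.finite_lt_nat (s j)).image (fun i => c j i + plen Lanes j i)))
  rintro x ⟨j, i, hi, rfl⟩
  exact Set.mem_iUnion.2 ⟨j, ⟨i, hi, rfl⟩⟩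

lemma le_completion (s : Fin k → ℕ) (c : Fin k → ℕ → ℝ) {j : Fin k} {i : ℕ}
    (h : i < s j) : c j i + plen Lanes j i ≤ completion Lanes s c :=
  le_csSup (compSet_finite Lanes s c).bddAbove (Or.inr ⟨j, i, h, rfl⟩)

lemma minRelease_le_completion (s : Fin k → ℕ) (c : Fin k → ℕ → ℝ) :
    minRelease Lanes ≤ completion Lanes s c :=
  le_csSup (compSet_finite Lanes s c).bddAbove (Or.inl rfl)

lemma completion_le {s : Fin k → ℕ} {c : Fin k → ℕ → ℝ} {B : ℝ}
    (hB : minRelease Lanes ≤ B)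
    (h : ∀ j, ∀ i < s j, c j i + plen Lanes j i ≤ B) :
    completion Lanes s c ≤ B := by
  apply csSup_le ⟨minRelease Lanes, Or.inl rfl⟩
  rintro x (rfl | ⟨j, i, hi, rfl⟩)
  · exact hB
  · exact h j i hi

lemma partialValid_mono {s s' : Fin k → ℕ} {c : Fin k → ℕ → ℝ}
    (h : ∀ j, s' j ≤ s j) (hv : PartialValid Lanes s c) :
    PartialValid Lanes s' c :=
  ⟨fun j i hi => hv.1 j i (lt_of_lt_of_le hi (h j)),
   fun j i₁ i₂ h12 h2 => hv.2.1 j i₁ i₂ h12 (lt_of_lt_of_le h2 (h j)),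
   fun j₁ j₂ hne i₁ h1 i₂ h2 =>
     hv.2.2 j₁ j₂ hne i₁ (lt_of_lt_of_le h1 (h j₁)) i₂ (lt_of_lt_of_le h2 (h j₂))⟩

lemma delayLE_mono {s s' : Fin k → ℕ} {c : Fin k → ℕ → ℝ} {d : ℝ}
    (h : ∀ j, s' j ≤ s j) (hd : DelayLE Lanes s c d) : DelayLE Lanes s' c d :=
  fun j i hi => hd j i (lt_of_lt_of_le hi (h j))

lemma ioo_cases {a₁ b₁ a₂ b₂ : ℝ} (h : Disjoint (Set.Ioo a₁ b₁) (Set.Ioo a₂ b₂))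
    (h1 : a₁ < b₁) (h2 : a₂ < b₂) : b₁ ≤ a₂ ∨ b₂ ≤ a₁ := by
  by_contra hc
  push_neg at hc
  obtain ⟨hA, hB⟩ := hc
  have hmm : max a₁ a₂ < min b₁ b₂ := max_lt (lt_min h1 hB) (lt_min hA h2)
  have hma1 := le_max_left a₁ a₂
  have hma2 := le_max_right a₁ a₂
  have hmi1 := min_le_left b₁ b₂
  have hmi2 := min_le_right b₁ b₂
  exact Set.disjoint_left.1 h
    (show (max a₁ a₂ + min b₁ b₂) / 2 ∈ Set.Ioo a₁ b₁ from ⟨by linarith, by linarith⟩)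
    (show (max a₁ a₂ + min b₁ b₂) / 2 ∈ Set.Ioo a₂ b₂ from ⟨by linarith, by linarith⟩)

lemma extend (hL : ∀ j, LaneOK (Lanes j)) {d : ℝ} {s : Fin k → ℕ} (j : Fin k)
    (hj : 1 ≤ s j) (hlen : s j - 1 < (Lanes j).length)
    (c' : Fin k → ℕ → ℝ)
    (hv : PartialValid Lanes (Function.update s j (s j - 1)) c')
    (hd : DelayLE Lanes (Function.update s j (s j - 1)) c' d)
    (M : ℝ) (hM1 : completion Lanes (Function.update s j (s j - 1)) c' ≤ M)
    (hM2 : rel Lanes j (s j - 1) ≤ M) (hMd : M ≤ rel Lanes j (s j - 1) + d) :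
    ∃ c, PartialValid Lanes s c ∧ DelayLE Lanes s c d ∧
      completion Lanes s c = M + plen Lanes j (s j - 1) := by
  classical
  set s' := Function.update s j (s j - 1) with hs'
  have hold : ∀ j' i, i < s j' → ¬(j' = j ∧ i = s j - 1) → i < s' j' := by
    intro j' i hi hn
    by_cases hjj : j' = j
    · subst hjj
      rw [hs', Function.update_self]
      have : i ≠ s j' - 1 := fun h => hn ⟨rfl, h⟩
      omega
    · rw [hs', Function.update_of_ne hjj]
      exact hi
  have hub : ∀ j' i, i < s' j' → c' j' i + plen Lanes j' i ≤ M :=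
    fun j' i hi => (le_completion Lanes s' c' hi).trans hM1
  refine ⟨fun j' i => if j' = j ∧ i = s j - 1 then M else c' j' i, ⟨?_, ?_, ?_⟩, ?_, ?_⟩
  · intro j' i hi
    beta_reduce
    by_cases hcase : j' = j ∧ i = s j - 1
    · obtain ⟨rfl, rfl⟩ := hcase
      rw [if_pos ⟨rfl, rfl⟩]
      exact hM2
    · rw [if_neg hcase]
      exact hv.1 j' i (hold j' i hi hcase)
  · intro j' i₁ i₂ h12 h2
    beta_reduce
    have hne1 : ¬(j' = j ∧ i₁ = s j - 1) := by
      rintro ⟨rfl, rfl⟩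
      omega
    rw [if_neg hne1]
    by_cases hcase : j' = j ∧ i₂ = s j - 1
    · obtain ⟨rfl, rfl⟩ := hcase
      rw [if_pos ⟨rfl, rfl⟩]
      refine (le_completion Lanes s' c' ?_).trans hM1
      rw [hs', Function.update_self]
      omega
    · rw [if_neg hcase]
      exact hv.2.1 j' i₁ i₂ h12 (hold j' i₂ h2 hcase)
  · intro j₁ j₂ hjj i₁ h1 i₂ h2
    beta_reduce
    by_cases hc1 : j₁ = j ∧ i₁ = s j - 1
    · obtain ⟨rfl, rfl⟩ := hc1
      rw [if_pos ⟨rfl, rfl⟩]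
      have hne2 : ¬(j₂ = j₁ ∧ i₂ = s j₁ - 1) := fun h => hjj h.1.symm
      rw [if_neg hne2]
      have hle : c' j₂ i₂ + plen Lanes j₂ i₂ ≤ M := by
        apply hub j₂ i₂
        rw [hs', Function.update_of_ne (fun h => hjj h.symm)]
        exact h2
      rw [Set.disjoint_left]
      intro x hx hx2
      have := hx.1
      have := hx2.2
      linarith
    · rw [if_neg hc1]
      by_cases hc2 : j₂ = j ∧ i₂ = s j - 1
      · obtain ⟨rfl, rfl⟩ := hc2
        rw [if_pos ⟨rfl, rfl⟩]
        have hle : c' j₁ i₁ + plen Lanes j₁ i₁ ≤ M := by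
          apply hub j₁ i₁
          rw [hs', Function.update_of_ne hjj]
          exact h1
        rw [Set.disjoint_left]
        intro x hx hx2
        have := hx.2
        have := hx2.1
        linarith
      · rw [if_neg hc2]
        exact hv.2.2 j₁ j₂ hjj i₁ (hold j₁ i₁ h1 hc1) i₂ (hold j₂ i₂ h2 hc2)
  · intro j' i hi
    beta_reduce
    by_cases hcase : j' = j ∧ i = s j - 1
    · obtain ⟨rfl, rfl⟩ := hcase
      rw [if_pos ⟨rfl, rfl⟩]
      linarith
    · rw [if_neg hcase]
      exact hd j' i (hold j' i hi hcase)
  · have hplen : 0 < plen Lanes j (s j - 1) := plen_pos Lanes hL hlen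
    apply le_antisymm
    · apply completion_le Lanes
      · refine (minRelease_le_completion Lanes s' c').trans (by linarith)
      · intro j' i hi
        beta_reduce
        by_cases hcase : j' = j ∧ i = s j - 1
        · obtain ⟨rfl, rfl⟩ := hcase
          rw [if_pos ⟨rfl, rfl⟩]
        · rw [if_neg hcase]
          have := hub j' i (hold j' i hi hcase)
          linarith
    · have h1 : s j - 1 < s j := by omega
      have h2 := le_completion Lanes s
        (fun j' i => if j' = j ∧ i = s j - 1 then M else c' j' i) h1
      simpa using h2

lemma td_all_zero (d : ℝ) (s : Fin k → ℕ) (hz : ∀ j, s j = 0) :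
    td Lanes d s = ((minRelease Lanes : ℝ) : EReal) ∧
      completion Lanes s (fun _ _ => 0) = minRelease Lanes ∧
      PartialValid Lanes s (fun _ _ => 0) ∧ DelayLE Lanes s (fun _ _ => 0) d := by
  have hempty : ∀ c : Fin k → ℕ → ℝ, completion Lanes s c = minRelease Lanes := by
    intro c
    have h1 : {x : ℝ | ∃ j, ∃ i < s j, x = c j i + plen Lanes j i} = ∅ := by
      ext x
      simp [hz]
    rw [completion, h1, Set.union_empty, csSup_singleton]
  have hv : PartialValid Lanes s (fun _ _ => 0) :=
    ⟨fun j i hi => absurd hi (by simp [hz j]),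
     fun j i₁ i₂ _ h2 => absurd h2 (by simp [hz j]),
     fun j₁ j₂ _ i₁ h1 => absurd h1 (by simp [hz j₁])⟩
  have hdl : DelayLE Lanes s (fun _ _ => 0) d := fun j i hi => absurd hi (by simp [hz j])
  refine ⟨le_antisymm ?_ ?_, hempty _, hv, hdl⟩
  · exact sInf_le ⟨_, hv, hdl, by rw [hempty]⟩
  · apply le_sInf
    rintro b ⟨c, _, _, rfl⟩
    rw [hempty]

lemma dir2 (hL : ∀ j, LaneOK (Lanes j)) (d : ℝ) (s : Fin k → ℕ)
    (hs : ∀ j, s j ≤ (Lanes j).length) (hne : ∃ j, 0 < s j) :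
    sInf {x : EReal | ∃ j : Fin k, 1 ≤ s j ∧
        max (td Lanes d (Function.update s j (s j - 1)))
            ((rel Lanes j (s j - 1) : ℝ) : EReal)
          ≤ ((rel Lanes j (s j - 1) + d : ℝ) : EReal) ∧
        x = max (td Lanes d (Function.update s j (s j - 1)))
              ((rel Lanes j (s j - 1) : ℝ) : EReal)
            + ((plen Lanes j (s j - 1) : ℝ) : EReal)} ≤ td Lanes d s := by
  classical
  apply le_sInf
  rintro b ⟨c, hv, hd, rfl⟩
  obtain ⟨j0, hj0⟩ := hne
  have hFne : (Finset.univ.filter (fun j : Fin k => 0 < s j)).Nonempty :=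
    ⟨j0, by simp [hj0]⟩
  obtain ⟨J, hJmem, hJmax⟩ := Finset.exists_max_image _
    (fun j => c j (s j - 1) + plen Lanes j (s j - 1)) hFne
  have hJs : 0 < s J := (Finset.mem_filter.1 hJmem).2
  have hi0lt : s J - 1 < s J := by omega
  have hi0len : s J - 1 < (Lanes J).length := lt_of_lt_of_le hi0lt (hs J)
  have hls : 0 < plen Lanes J (s J - 1) := plen_pos Lanes hL hi0len
  have key : ∀ j' i, i < s j' →
      c j' i + plen Lanes j' i ≤ c J (s J - 1) + plen Lanes J (s J - 1) := by
    intro j' i hi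
    have hup : c j' i + plen Lanes j' i ≤ c j' (s j' - 1) + plen Lanes j' (s j' - 1) := by
      rcases Nat.lt_or_ge i (s j' - 1) with h | h
      · have hstep := hv.2.1 j' i (s j' - 1) h (by omega)
        have hpos : 0 < plen Lanes j' (s j' - 1) :=
          plen_pos Lanes hL (lt_of_lt_of_le (by omega) (hs j'))
        linarith
      · have hieq : i = s j' - 1 := by omega
        rw [hieq]
    have hmem : j' ∈ Finset.univ.filter (fun j : Fin k => 0 < s j) := by
      simp
      omega
    exact hup.trans (hJmax j' hmem)
  set s' := Function.update s J (s J - 1) with hs'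
  have key2 : ∀ j', ∀ i < s' j', c j' i + plen Lanes j' i ≤ c J (s J - 1) := by
    intro j' i hi
    by_cases hjj : j' = J
    · subst hjj
      rw [hs', Function.update_self] at hi
      exact hv.2.1 j' i (s j' - 1) hi hi0lt
    · rw [hs', Function.update_of_ne hjj] at hi
      have hpos1 : 0 < plen Lanes j' i := plen_pos Lanes hL (lt_of_lt_of_le hi (hs j'))
      have hdisj := hv.2.2 j' J hjj i hi (s J - 1) hi0lt
      rcases ioo_cases hdisj (by linarith) (by linarith) with h | h
      · exact h
      · exfalso
        have := key j' i hi
        linarith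
  have hle' : ∀ j', s' j' ≤ s j' := by
    intro j'
    by_cases hjj : j' = J
    · subst hjj
      rw [hs', Function.update_self]
      omega
    · rw [hs', Function.update_of_ne hjj]
  have hv' : PartialValid Lanes s' c := partialValid_mono Lanes hle' hv
  have hd' : DelayLE Lanes s' c d := delayLE_mono Lanes hle' hd
  have hrel : rel Lanes J (s J - 1) ≤ c J (s J - 1) := hv.1 J (s J - 1) hi0lt
  have hcomp' : completion Lanes s' c ≤ c J (s J - 1) :=
    completion_le Lanes ((minRelease_le Lanes hi0len).trans hrel) key2
  have hmem' : ((completion Lanes s' c : ℝ) : EReal) ∈ {x : EReal | ∃ c2,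
      PartialValid Lanes s' c2 ∧ DelayLE Lanes s' c2 d ∧
      x = ((completion Lanes s' c2 : ℝ) : EReal)} := ⟨c, hv', hd', rfl⟩
  have htd' : td Lanes d s' ≤ ((c J (s J - 1) : ℝ) : EReal) :=
    (sInf_le hmem').trans (EReal.coe_le_coe_iff.2 hcomp')
  have hdelay : c J (s J - 1) ≤ rel Lanes J (s J - 1) + d := by
    have := hd J (s J - 1) hi0lt
    linarith
  have hmax : max (td Lanes d s') ((rel Lanes J (s J - 1) : ℝ) : EReal)
      ≤ ((c J (s J - 1) : ℝ) : EReal) :=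
    max_le htd' (EReal.coe_le_coe_iff.2 hrel)
  have hcond : max (td Lanes d s') ((rel Lanes J (s J - 1) : ℝ) : EReal)
      ≤ ((rel Lanes J (s J - 1) + d : ℝ) : EReal) :=
    hmax.trans (EReal.coe_le_coe_iff.2 hdelay)
  have hmemJ : max (td Lanes d s') ((rel Lanes J (s J - 1) : ℝ) : EReal)
        + ((plen Lanes J (s J - 1) : ℝ) : EReal) ∈ {x : EReal | ∃ j : Fin k, 1 ≤ s j ∧
      max (td Lanes d (Function.update s j (s j - 1)))
          ((rel Lanes j (s j - 1) : ℝ) : EReal)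
        ≤ ((rel Lanes j (s j - 1) + d : ℝ) : EReal) ∧
      x = max (td Lanes d (Function.update s j (s j - 1)))
            ((rel Lanes j (s j - 1) : ℝ) : EReal)
          + ((plen Lanes j (s j - 1) : ℝ) : EReal)} := ⟨J, hJs, hcond, rfl⟩
  refine (sInf_le hmemJ).trans ?_
  have h1 : max (td Lanes d s') ((rel Lanes J (s J - 1) : ℝ) : EReal)
        + ((plen Lanes J (s J - 1) : ℝ) : EReal)
      ≤ ((c J (s J - 1) : ℝ) : EReal) + ((plen Lanes J (s J - 1) : ℝ) : EReal) :=
    add_le_add_left hmax _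
  refine h1.trans ?_
  rw [← EReal.coe_add]
  exact EReal.coe_le_coe_iff.2 (le_completion Lanes s c hi0lt)

lemma main_rec (hL : ∀ j, LaneOK (Lanes j)) (d : ℝ) :
    ∀ n (s : Fin k → ℕ), (∑ j, s j) ≤ n → (∀ j, s j ≤ (Lanes j).length) →
      ((∃ j, 0 < s j) → td Lanes d s =
        sInf {x : EReal | ∃ j : Fin k, 1 ≤ s j ∧
          max (td Lanes d (Function.update s j (s j - 1)))
              ((rel Lanes j (s j - 1) : ℝ) : EReal)
            ≤ ((rel Lanes j (s j - 1) + d : ℝ) : EReal) ∧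
          x = max (td Lanes d (Function.update s j (s j - 1)))
                ((rel Lanes j (s j - 1) : ℝ) : EReal)
              + ((plen Lanes j (s j - 1) : ℝ) : EReal)}) ∧
      (td Lanes d s ≠ ⊤ → ∃ c, PartialValid Lanes s c ∧ DelayLE Lanes s c d ∧
        td Lanes d s = ((completion Lanes s c : ℝ) : EReal)) := by
  intro n
  induction n with
  | zero =>
    intro s hsum hs
    have hz : ∀ j, s j = 0 := fun j =>
      Finset.sum_eq_zero_iff.1 (Nat.le_zero.1 hsum) j (Finset.mem_univ j)
    obtain ⟨h1, h2, h3, h4⟩ := td_all_zero Lanes d s hz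
    refine ⟨fun ⟨j, hj⟩ => absurd hj (by simp [hz j]), fun _ => ⟨_, h3, h4, by rw [h1, h2]⟩⟩
  | succ n ih =>
    intro s hsum hs
    by_cases hne : ∃ j, 0 < s j
    · -- build a schedule from any admissible lane j
      have build : ∀ j : Fin k, 1 ≤ s j →
          max (td Lanes d (Function.update s j (s j - 1))) ((rel Lanes j (s j - 1) : ℝ) : EReal)
            ≤ ((rel Lanes j (s j - 1) + d : ℝ) : EReal) →
          ∃ c, PartialValid Lanes s c ∧ DelayLE Lanes s c d ∧
            ((completion Lanes s c : ℝ) : EReal) =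
              max (td Lanes d (Function.update s j (s j - 1)))
                  ((rel Lanes j (s j - 1) : ℝ) : EReal)
                + ((plen Lanes j (s j - 1) : ℝ) : EReal) := by
        intro j hj hcond
        have hsum' : (∑ j', Function.update s j (s j - 1) j') ≤ n := by
          rw [Finset.sum_update_of_mem (Finset.mem_univ j) s (s j - 1), ← Finset.erase_eq]
          have h2 := Finset.add_sum_erase Finset.univ s (Finset.mem_univ j)
          omega
        have hs' : ∀ j', Function.update s j (s j - 1) j' ≤ (Lanes j').length := by
          intro j'
          by_cases hjj : j' = j
          · subst hjj
            rw [Function.update_self]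
            exact le_trans (by omega) (hs j')
          · rw [Function.update_of_ne hjj]
            exact hs j'
        have hnt : td Lanes d (Function.update s j (s j - 1)) ≠ ⊤ := by
          intro h
          rw [h] at hcond
          have htop : (⊤ : EReal) ≤ ((rel Lanes j (s j - 1) + d : ℝ) : EReal) :=
            le_trans (le_max_left _ _) hcond
          exact EReal.coe_ne_top _ (top_le_iff.1 htop)
        obtain ⟨c', hv', hd', heq⟩ := (ih _ hsum' hs').2 hnt
        have hmaxeq : max (td Lanes d (Function.update s j (s j - 1)))
              ((rel Lanes j (s j - 1) : ℝ) : EReal)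
            = ((max (completion Lanes (Function.update s j (s j - 1)) c')
                (rel Lanes j (s j - 1)) : ℝ) : EReal) := by
          rw [heq]
          exact (Monotone.map_max (fun _ _ h => EReal.coe_le_coe_iff.2 h)).symm
        have hMd : max (completion Lanes (Function.update s j (s j - 1)) c')
            (rel Lanes j (s j - 1)) ≤ rel Lanes j (s j - 1) + d := by
          rw [hmaxeq] at hcond
          exact EReal.coe_le_coe_iff.1 hcond
        obtain ⟨c, hvv, hdd, hcomp⟩ := extend Lanes hL j hj
          (lt_of_lt_of_le (by omega) (hs j)) c' hv' hd'
          (max (completion Lanes (Function.update s j (s j - 1)) c') (rel Lanes j (s j - 1)))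
          (le_max_left _ _) (le_max_right _ _) hMd
        exact ⟨c, hvv, hdd, by rw [hcomp, EReal.coe_add, hmaxeq]⟩
      have hrec : td Lanes d s =
          sInf {x : EReal | ∃ j : Fin k, 1 ≤ s j ∧
            max (td Lanes d (Function.update s j (s j - 1)))
                ((rel Lanes j (s j - 1) : ℝ) : EReal)
              ≤ ((rel Lanes j (s j - 1) + d : ℝ) : EReal) ∧
            x = max (td Lanes d (Function.update s j (s j - 1)))
                  ((rel Lanes j (s j - 1) : ℝ) : EReal)
                + ((plen Lanes j (s j - 1) : ℝ) : EReal)} := by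
        apply le_antisymm
        · apply le_sInf
          rintro x ⟨j, hj, hcond, rfl⟩
          obtain ⟨c, hvv, hdd, hcomp⟩ := build j hj hcond
          have hmemc : ((completion Lanes s c : ℝ) : EReal) ∈ {x : EReal | ∃ c2,
              PartialValid Lanes s c2 ∧ DelayLE Lanes s c2 d ∧
              x = ((completion Lanes s c2 : ℝ) : EReal)} := ⟨c, hvv, hdd, rfl⟩
          have hmem : td Lanes d s ≤ ((completion Lanes s c : ℝ) : EReal) :=
            sInf_le hmemc
          rw [hcomp] at hmem
          exact hmem
        · exact dir2 Lanes hL d s hs hne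
      refine ⟨fun _ => hrec, ?_⟩
      intro hnt
      rw [hrec] at hnt ⊢
      have hfin : {x : EReal | ∃ j : Fin k, 1 ≤ s j ∧
          max (td Lanes d (Function.update s j (s j - 1)))
              ((rel Lanes j (s j - 1) : ℝ) : EReal)
            ≤ ((rel Lanes j (s j - 1) + d : ℝ) : EReal) ∧
          x = max (td Lanes d (Function.update s j (s j - 1)))
                ((rel Lanes j (s j - 1) : ℝ) : EReal)
              + ((plen Lanes j (s j - 1) : ℝ) : EReal)}.Finite := by
        apply Set.Finite.subset (Set.finite_range (fun j : Fin k =>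
          max (td Lanes d (Function.update s j (s j - 1)))
              ((rel Lanes j (s j - 1) : ℝ) : EReal)
            + ((plen Lanes j (s j - 1) : ℝ) : EReal)))
        rintro x ⟨j, _, _, rfl⟩
        exact ⟨j, rfl⟩
      have hnes : {x : EReal | ∃ j : Fin k, 1 ≤ s j ∧
          max (td Lanes d (Function.update s j (s j - 1)))
              ((rel Lanes j (s j - 1) : ℝ) : EReal)
            ≤ ((rel Lanes j (s j - 1) + d : ℝ) : EReal) ∧
          x = max (td Lanes d (Function.update s j (s j - 1)))
                ((rel Lanes j (s j - 1) : ℝ) : EReal)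
              + ((plen Lanes j (s j - 1) : ℝ) : EReal)}.Nonempty := by
        by_contra h
        rw [Set.not_nonempty_iff_eq_empty.1 h, sInf_empty] at hnt
        exact hnt rfl
      obtain ⟨j, hj, hcond, heq⟩ := hnes.csInf_mem hfin
      obtain ⟨c, hvv, hdd, hcomp⟩ := build j hj hcond
      exact ⟨c, hvv, hdd, by rw [heq, hcomp]⟩
    · push_neg at hne
      have hz : ∀ j, s j = 0 := fun j => Nat.le_zero.1 (hne j)
      obtain ⟨h1, h2, h3, h4⟩ := td_all_zero Lanes d s hz
      refine ⟨fun ⟨j, hj⟩ => absurd hj (by simp [hz j]), fun _ => ⟨_, h3, h4, by rw [h1, h2]⟩⟩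

end Helpers

/-- Dynamic programming recurrence for the `k`-way merge: for every nonempty
state `s`, `td Lanes d s` is the minimum, over all lanes `j` with `s j ≥ 1` such
that `max (td Lanes d (s - eⱼ)) r ≤ r + d`, of `max (td Lanes d (s - eⱼ)) r + ℓ`,
where `s - eⱼ` decreases the `j`-th coordinate by one and `r`, `ℓ` are the
release time and length of the `s j`-th platoon (in release order) on lane `j`;
the minimum (infimum in `EReal`) over an empty set is `+∞`. -/
theorem stmt9 {k : ℕ} (Lanes : Fin k → List Platoon) (hL : ∀ j, LaneOK (Lanes j))
    (d : ℝ) (s : Fin k → ℕ) (hs : ∀ j, s j ≤ (Lanes j).length)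
    (hne : ∃ j, 0 < s j) :
    td Lanes d s =
      sInf {x : EReal | ∃ j : Fin k, 1 ≤ s j ∧
        max (td Lanes d (Function.update s j (s j - 1)))
            ((rel Lanes j (s j - 1) : ℝ) : EReal)
          ≤ ((rel Lanes j (s j - 1) + d : ℝ) : EReal) ∧
        x = max (td Lanes d (Function.update s j (s j - 1)))
              ((rel Lanes j (s j - 1) : ℝ) : EReal)
            + ((plen Lanes j (s j - 1) : ℝ) : EReal)} := by
  exact (main_rec Lanes hL d (∑ j, s j) s le_rfl hs).1 hne
end
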